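/- Let V be a finite-dimensional complex symplectic vector space and G ⊂ Sp(V) a finite subgroup. For any elements g, h ∈ G such that V = V^g + V^h, one has V^{g·h} = V^g ∩ V^h. -/

import Mathlib

lemma orth_aux {V : Type*} [AddCommGroup V] [Module ℂ V]
    (ω : LinearMap.BilinForm ℂ V) (g : V ≃ₗ[ℂ] V)
    (hsymp : ∀ u v : V, ω (g u) (g v) = ω u v)
    (u w : V) (hw : g w = w) : ω (u - g u) w = 0 := by
  have h1 : ω (g u) w = ω u w := by
    conv_lhs => rw [← hw]
    exact hsymp u w
  simp [map_sub, LinearMap.sub_apply, h1]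

/-- Lemma "easy" of Ginzburg–Kaledin.
Let `V` be a finite-dimensional complex symplectic vector space and `G ⊂ Sp(V)` a finite
subgroup.  For any `g, h ∈ G` with `V = V^g + V^h`, one has `V^{g·h} = V^g ∩ V^h`,
where `V^g = ker (id - g)` is the fixed subspace. -/
theorem fixed_space_of_mul_eq_inf
    (V : Type*) [AddCommGroup V] [Module ℂ V] [FiniteDimensional ℂ V]
    (ω : LinearMap.BilinForm ℂ V) (hAlt : ω.IsAlt) (hNondeg : ω.Nondegenerate)
    (G : Subgroup (V ≃ₗ[ℂ] V)) (hGfin : Finite G)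
    (hGsymp : ∀ g ∈ G, ∀ u v : V, ω (g u) (g v) = ω u v)
    (g h : V ≃ₗ[ℂ] V) (hg : g ∈ G) (hh : h ∈ G)
    (hsum : LinearMap.ker ((1 : V →ₗ[ℂ] V) - g.toLinearMap) ⊔
        LinearMap.ker ((1 : V →ₗ[ℂ] V) - h.toLinearMap) = ⊤) :
    LinearMap.ker ((1 : V →ₗ[ℂ] V) - (g * h).toLinearMap) =
      LinearMap.ker ((1 : V →ₗ[ℂ] V) - g.toLinearMap) ⊓
        LinearMap.ker ((1 : V →ₗ[ℂ] V) - h.toLinearMap) := by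
  apply le_antisymm
  · intro v hv
    simp only [LinearMap.mem_ker, LinearMap.sub_apply, Module.End.one_apply,
      LinearEquiv.coe_coe] at hv
    have hghv : g (h v) = v := by
      have := sub_eq_zero.mp hv
      simpa using this.symm
    set x : V := h v - v with hxdef
    have hxg : x = h v - g (h v) := by rw [hghv]
    have hxh : x = -(v - h v) := by simp [hxdef]
    have hx0 : x = 0 := by
      apply hNondeg.1
      intro w
      have hw : w ∈ LinearMap.ker ((1 : V →ₗ[ℂ] V) - g.toLinearMap) ⊔
          LinearMap.ker ((1 : V →ₗ[ℂ] V) - h.toLinearMap) := hsum ▸ Submodule.mem_top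
      obtain ⟨a, ha, b, hb, rfl⟩ := Submodule.mem_sup.mp hw
      simp only [SetLike.mem_coe, LinearMap.mem_ker, LinearMap.sub_apply,
        Module.End.one_apply, LinearEquiv.coe_coe, sub_eq_zero] at ha hb
      have hxa : ω x a = 0 := by
        rw [hxg]
        exact orth_aux ω g (hGsymp g hg) (h v) a ha.symm
      have hxb : ω x b = 0 := by
        rw [hxh]
        have h2 := orth_aux ω h (hGsymp h hh) v b hb.symm
        simp only [map_neg, LinearMap.neg_apply, h2, neg_zero]
      rw [map_add, hxa, hxb, add_zero]
    have hhv : h v = v := by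
      have := sub_eq_zero.mp hx0
      exact this
    have hgv : g v = v := by
      calc g v = g (h v) := by rw [hhv]
        _ = v := hghv
    refine ⟨?_, ?_⟩ <;>
      simp only [SetLike.mem_coe, LinearMap.mem_ker, LinearMap.sub_apply,
        Module.End.one_apply, LinearEquiv.coe_coe, sub_eq_zero]
    · exact hgv.symm
    · exact hhv.symm
  · rintro v ⟨hv1, hv2⟩
    simp only [SetLike.mem_coe, LinearMap.mem_ker, LinearMap.sub_apply,
      Module.End.one_apply, LinearEquiv.coe_coe, sub_eq_zero] at hv1 hv2 ⊢
    show v = g (h v)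
    rw [← hv2, ← hv1]
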